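/- Let V be an n-dimensional real vector space and let ρ ∈ ⋀V*_ℂ be a pure spinor of the usual generalized-complex form, ρ = exp(B + iω) ∧ θ₁ ∧ … ∧ θ_k, where B, ω ∈ ⋀²V* are real 2-forms and θ₁, …, θ_k are complex 1-forms. If the degree-n component [ρ⊤ ∧ ρ̄]_n of ρ⊤ ∧ ρ̄ is nonzero, then n is even. -/

import Mathlib

set_option synthInstance.maxHeartbeats 1000000
set_option maxHeartbeats 1000000

open ExteriorAlgebra

noncomputable section

variable (V : Type*) [AddCommGroup V] [Module ℝ V] [FiniteDimensional ℝ V]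

/-- The complexified dual `V*_ℂ`: complex-valued real-linear forms on `V`. -/
abbrev CplxDual := V →ₗ[ℝ] ℂ

/-- A real covector viewed as a complex one. -/
def cplxOfReal (θ : Module.Dual ℝ V) : CplxDual V := (Algebra.linearMap ℝ ℂ).comp θ

/-- Complex conjugation of a complex covector. -/
def conjCov (θ : CplxDual V) : CplxDual V := Complex.conjAe.toLinearMap.comp θ

/-- `exp(B) = Σ_k B^{∧k}/k!`; summing up to `dim V` is enough for 2-forms `B`,
which are nilpotent. -/
def expWedgeC (B : ExteriorAlgebra ℂ (CplxDual V)) : ExteriorAlgebra ℂ (CplxDual V) :=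
  ∑ k ∈ Finset.range (Module.finrank ℝ V + 1), (k.factorial : ℂ)⁻¹ • B ^ k

/-- The degree-`i` component of an element of `⋀ V*_ℂ`. -/
def degComp (i : ℕ) (x : ExteriorAlgebra ℂ (CplxDual V)) : ExteriorAlgebra ℂ (CplxDual V) :=
  (DirectSum.decompose (fun i : ℕ => ⋀[ℂ]^i (CplxDual V)) x i : ExteriorAlgebra ℂ (CplxDual V))

set_option linter.unusedSectionVars false in
/-- At an odd degree, the degree component of an element of the even part vanishes. -/
lemma aux_degComp_zero (n : ℕ) (hn : ¬ Even n)
    (x : ExteriorAlgebra ℂ (CplxDual V))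
    (hx : x ∈ CliffordAlgebra.evenOdd (0 : QuadraticForm ℂ (CplxDual V)) 0) :
    degComp V n x = 0 := by
  let f : ExteriorAlgebra ℂ (CplxDual V) →ₗ[ℂ] ExteriorAlgebra ℂ (CplxDual V) :=
    (⋀[ℂ]^n (CplxDual V)).subtype ∘ₗ
      (DirectSum.component ℂ ℕ (fun i => ⋀[ℂ]^i (CplxDual V)) n) ∘ₗ
      (DirectSum.decomposeLinearEquiv (fun i : ℕ => ⋀[ℂ]^i (CplxDual V))).toLinearMap
  have hf : ∀ y, f y = degComp V n y := fun y => rfl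
  rw [← hf]
  have hle : CliffordAlgebra.evenOdd (0 : QuadraticForm ℂ (CplxDual V)) 0 ≤
      LinearMap.ker f := by
    rw [CliffordAlgebra.evenOdd]
    apply iSup_le
    rintro ⟨j, hj⟩
    intro y hy
    have hjn : j ≠ n := by
      rintro rfl
      exact hn (even_iff_two_dvd.mpr ((ZMod.natCast_eq_zero_iff j 2).mp hj))
    have hy' : y ∈ (⋀[ℂ]^j (CplxDual V)) := hy
    simp only [LinearMap.mem_ker, hf]
    unfold degComp
    rw [DirectSum.decompose_of_mem_ne (fun i : ℕ => ⋀[ℂ]^i (CplxDual V)) hy' hjn]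
  exact hle hx

set_option linter.unusedSectionVars false in
lemma aux_list_prod_mem (l : List (CplxDual V)) :
    (l.map (ExteriorAlgebra.ι ℂ)).prod ∈
      CliffordAlgebra.evenOdd (0 : QuadraticForm ℂ (CplxDual V)) (l.length : ZMod 2) := by
  induction l with
  | nil => simpa using SetLike.one_mem_graded _
  | cons x t ih =>
      simp only [List.map_cons, List.prod_cons, List.length_cons]
      have := SetLike.mul_mem_graded (CliffordAlgebra.ι_mem_evenOdd_one
        (0 : QuadraticForm ℂ (CplxDual V)) x) ih
      convert this using 2
      push_cast
      ring

set_option linter.unusedSectionVars false in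
lemma aux_exp_mem (x : ExteriorAlgebra ℂ (CplxDual V))
    (hx : x ∈ CliffordAlgebra.evenOdd (0 : QuadraticForm ℂ (CplxDual V)) 0) :
    expWedgeC V x ∈ CliffordAlgebra.evenOdd (0 : QuadraticForm ℂ (CplxDual V)) 0 := by
  apply Submodule.sum_mem
  intro j _
  apply Submodule.smul_mem
  simpa using SetLike.pow_mem_graded j hx

/-- let `V` be an `n`-dimensional real vector space and
`ρ = exp(B+iω) ∧ θ₁ ∧ … ∧ θ_k ∈ ⋀V*_ℂ` a pure spinor of the usual generalized-complex form,
where `B`, `ω` are real 2-forms (written as sums of decomposable real 2-forms) and the `θⱼ`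
are complex 1-forms.  If the degree-`n` component of `ρ⊤ ∧ ρ̄` is nonzero, then `n` is even.
Here `ρ̄ = exp(B-iω) ∧ θ̄₁ ∧ … ∧ θ̄_k` is the complex conjugate of `ρ` and `⊤` is the
reversal anti-automorphism. -/
theorem even_dim_of_pure_real_index_zero
    (k : ℕ) (θ : Fin k → CplxDual V)
    (NB Nω : ℕ) (aB bB : Fin NB → Module.Dual ℝ V) (aω bω : Fin Nω → Module.Dual ℝ V)
    (B ω : ExteriorAlgebra ℂ (CplxDual V))
    (hB : B = ∑ i, ExteriorAlgebra.ι ℂ (cplxOfReal V (aB i)) *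
      ExteriorAlgebra.ι ℂ (cplxOfReal V (bB i)))
    (hω : ω = ∑ i, ExteriorAlgebra.ι ℂ (cplxOfReal V (aω i)) *
      ExteriorAlgebra.ι ℂ (cplxOfReal V (bω i)))
    (ρ ρbar : ExteriorAlgebra ℂ (CplxDual V))
    (hρ : ρ = expWedgeC V (B + Complex.I • ω) *
      (List.ofFn fun j => ExteriorAlgebra.ι ℂ (θ j)).prod)
    (hρbar : ρbar = expWedgeC V (B - Complex.I • ω) *
      (List.ofFn fun j => ExteriorAlgebra.ι ℂ (conjCov V (θ j))).prod)
    (hne : degComp V (Module.finrank ℝ V) (CliffordAlgebra.reverse ρ * ρbar) ≠ 0) :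
    Even (Module.finrank ℝ V) := by
  set Q : QuadraticForm ℂ (CplxDual V) := 0
  have hBmem : B ∈ CliffordAlgebra.evenOdd Q 0 := by
    rw [hB]
    exact Submodule.sum_mem _ fun i _ => CliffordAlgebra.ι_mul_ι_mem_evenOdd_zero Q _ _
  have hωmem : ω ∈ CliffordAlgebra.evenOdd Q 0 := by
    rw [hω]
    exact Submodule.sum_mem _ fun i _ => CliffordAlgebra.ι_mul_ι_mem_evenOdd_zero Q _ _
  have hplus : B + Complex.I • ω ∈ CliffordAlgebra.evenOdd Q 0 :=
    Submodule.add_mem _ hBmem (Submodule.smul_mem _ _ hωmem)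
  have hminus : B - Complex.I • ω ∈ CliffordAlgebra.evenOdd Q 0 :=
    Submodule.sub_mem _ hBmem (Submodule.smul_mem _ _ hωmem)
  have hl1 : (List.ofFn fun j => ExteriorAlgebra.ι ℂ (θ j)).prod ∈
      CliffordAlgebra.evenOdd Q (k : ZMod 2) := by
    have := aux_list_prod_mem V (List.ofFn θ)
    simpa [List.map_ofFn, Function.comp_def] using this
  have hl2 : (List.ofFn fun j => ExteriorAlgebra.ι ℂ (conjCov V (θ j))).prod ∈
      CliffordAlgebra.evenOdd Q (k : ZMod 2) := by
    have := aux_list_prod_mem V (List.ofFn fun j => conjCov V (θ j))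
    simpa [List.map_ofFn, Function.comp_def] using this
  have hρmem : ρ ∈ CliffordAlgebra.evenOdd Q (k : ZMod 2) := by
    rw [hρ]
    simpa using SetLike.mul_mem_graded (aux_exp_mem V _ hplus) hl1
  have hρbarmem : ρbar ∈ CliffordAlgebra.evenOdd Q (k : ZMod 2) := by
    rw [hρbar]
    simpa using SetLike.mul_mem_graded (aux_exp_mem V _ hminus) hl2
  have hrev : CliffordAlgebra.reverse ρ ∈ CliffordAlgebra.evenOdd Q (k : ZMod 2) :=
    (CliffordAlgebra.reverse_mem_evenOdd_iff Q).mpr hρmem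
  have hprod : CliffordAlgebra.reverse ρ * ρbar ∈ CliffordAlgebra.evenOdd Q 0 := by
    have := SetLike.mul_mem_graded hrev hρbarmem
    have hkk : ((k : ZMod 2) + (k : ZMod 2)) = 0 := by
      have : ((k + k : ℕ) : ZMod 2) = 0 := by
        rw [ZMod.natCast_eq_zero_iff]; omega
      simpa [Nat.cast_add] using this
    rwa [hkk] at this
  by_contra hodd
  exact hne (aux_degComp_zero V _ hodd _ hprod)


end
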